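/- Let G be a graph without isolated vertices such that for every vertex x the localization G_x is in W₂ with α(G_x) = α(G) − 1, and such that for every edge ab the graph G_{ab} is well-covered with α(G_{ab}) = α(G) − 1, and such that every G_y has no isolated vertices. Then for every vertex x, the graph G \ x is well-covered with α(G \ x) = α(G). -/

import Mathlib

open Finset

section EdgeIdealPaper

variable {V : Type*} [Fintype V] [DecidableEq V]

/-- `S` is an independent set of vertices in `G`. -/
def IsIndep (G : SimpleGraph V) (S : Finset V) : Prop :=
  ∀ u ∈ S, ∀ v ∈ S, ¬ G.Adj u v

/-- `S` is a maximal independent set of the induced subgraph of `G` on `A`. -/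
def IsMaxIndepIn (G : SimpleGraph V) (A S : Finset V) : Prop :=
  S ⊆ A ∧ IsIndep G S ∧ ∀ v ∈ A, v ∉ S → ¬ IsIndep G (insert v S)

open scoped Classical in
/-- The independence number of the induced subgraph of `G` on `A`. -/
noncomputable def alphaIn (G : SimpleGraph V) (A : Finset V) : ℕ :=
  ((A.powerset).filter (fun S => IsIndep G S)).sup Finset.card

/-- The induced subgraph of `G` on `A` is well-covered. -/
def WellCoveredIn (G : SimpleGraph V) (A : Finset V) : Prop :=
  ∀ S, IsMaxIndepIn G A S → S.card = alphaIn G A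

/-- The induced subgraph of `G` on `A` is in the class `W₂`. -/
def W2In (G : SimpleGraph V) (A : Finset V) : Prop :=
  WellCoveredIn G A ∧
    ∀ x ∈ A, WellCoveredIn G (A.erase x) ∧ alphaIn G (A.erase x) = alphaIn G A

open scoped Classical in
/-- The neighborhood of a vertex `a` in `G`, as a `Finset`. -/
noncomputable def nbr (G : SimpleGraph V) (a : V) : Finset V :=
  univ.filter (fun v => G.Adj a v)

open scoped Classical in
/-- The neighborhood `N_G(S)` of a set `S` of vertices: vertices outside `S`
adjacent to some vertex of `S`. -/
noncomputable def nbrSet (G : SimpleGraph V) (S : Finset V) : Finset V :=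
  univ.filter (fun v => v ∉ S ∧ ∃ u ∈ S, G.Adj u v)

/-- The vertex set of the localization `G_S = G \ (S ∪ N_G(S))`. -/
noncomputable def loc (G : SimpleGraph V) (S : Finset V) : Finset V :=
  univ \ (S ∪ nbrSet G S)

/-- The vertex set of `G_{ab} = G \ (N_G(a) ∪ N_G(b))`. -/
noncomputable def locE (G : SimpleGraph V) (a b : V) : Finset V :=
  univ \ (nbr G a ∪ nbr G b)

/-- The induced subgraph of `G` on `A` has no isolated vertices. -/
def NoIsolatedIn (G : SimpleGraph V) (A : Finset V) : Prop :=
  ∀ v ∈ A, ∃ u ∈ A, G.Adj v u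

open scoped Classical in
/-- The reduced Euler characteristic `∑_{F} (-1)^{|F|-1}` (the empty face
contributing `-1`) of the independence complex of the induced subgraph of `G` on `A`. -/
noncomputable def indEuler (G : SimpleGraph V) (A : Finset V) : ℤ :=
  -∑ S ∈ (A.powerset).filter (fun S => IsIndep G S), (-1 : ℤ) ^ S.card

end EdgeIdealPaper

section EdgeIdealPaper

variable {V : Type*} [Fintype V] [DecidableEq V]

lemma indep_subset' {G : SimpleGraph V} {S T : Finset V} (h : IsIndep G S) (hTS : T ⊆ S) :
    IsIndep G T := fun u hu v hv => h u (hTS hu) v (hTS hv)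

lemma adj_of_not_indep_insert {G : SimpleGraph V} {S : Finset V} {v : V}
    (hS : IsIndep G S) (h : ¬ IsIndep G (insert v S)) : ∃ s ∈ S, G.Adj v s := by
  by_contra hc
  push_neg at hc
  apply h
  intro a ha b hb
  rcases Finset.mem_insert.1 ha with rfl | ha'
  · rcases Finset.mem_insert.1 hb with rfl | hb'
    · exact fun h' => G.loopless.irrefl _ h'
    · exact hc _ hb'
  · rcases Finset.mem_insert.1 hb with rfl | hb'
    · exact fun h' => hc _ ha' h'.symm
    · exact hS _ ha' _ hb'

lemma card_le_alphaIn {G : SimpleGraph V} {A S : Finset V} (hSA : S ⊆ A) (hS : IsIndep G S) :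
    S.card ≤ alphaIn G A := by
  classical
  unfold alphaIn
  refine Finset.le_sup ?_
  simp only [Finset.mem_filter, Finset.mem_powerset]
  exact ⟨hSA, hS⟩

lemma alphaIn_mono {G : SimpleGraph V} {A B : Finset V} (h : A ⊆ B) :
    alphaIn G A ≤ alphaIn G B := by
  classical
  unfold alphaIn
  apply Finset.sup_mono
  intro S hS
  simp only [Finset.mem_filter, Finset.mem_powerset] at *
  exact ⟨hS.1.trans h, hS.2⟩

lemma exists_max_indep (G : SimpleGraph V) {A S : Finset V} (hSA : S ⊆ A) (hS : IsIndep G S) :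
    ∃ M, S ⊆ M ∧ IsMaxIndepIn G A M := by
  classical
  obtain ⟨M, hM, hmax⟩ := Finset.exists_max_image
    (A.powerset.filter fun T => S ⊆ T ∧ IsIndep G T) Finset.card
    ⟨S, by simp only [Finset.mem_filter, Finset.mem_powerset]; exact ⟨hSA, le_refl S, hS⟩⟩
  simp only [Finset.mem_filter, Finset.mem_powerset] at hM
  refine ⟨M, hM.2.1, hM.1, hM.2.2, ?_⟩
  intro v hv hvM hind
  have hle : (insert v M).card ≤ M.card := hmax _ (by
    simp only [Finset.mem_filter, Finset.mem_powerset]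
    exact ⟨Finset.insert_subset hv hM.1, hM.2.1.trans (Finset.subset_insert _ _), hind⟩)
  rw [Finset.card_insert_of_notMem hvM] at hle
  omega

lemma mem_loc_singleton {G : SimpleGraph V} {s v : V} :
    v ∈ loc G {s} ↔ v ≠ s ∧ ¬ G.Adj s v := by
  classical
  simp only [loc, nbrSet, Finset.mem_sdiff, Finset.mem_univ, true_and, Finset.mem_union,
    Finset.mem_singleton, Finset.mem_filter, not_or]
  constructor
  · rintro ⟨h1, h2⟩
    refine ⟨h1, fun hadj => h2 ⟨h1, ⟨s, rfl, hadj⟩⟩⟩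
  · rintro ⟨h1, h2⟩
    refine ⟨h1, ?_⟩
    rintro ⟨-, u, rfl, hadj⟩
    exact h2 hadj

/-- If `G` has no isolated vertices, every localization `G_x` is in `W₂` with
`α(G_x) = α(G) - 1`, every `G_{ab}` is well-covered with `α(G_{ab}) = α(G) - 1`,
and every `G_y` has no isolated vertices, then `G \ x` is well-covered with
`α(G \ x) = α(G)` for every vertex `x`. -/
theorem stmt19 (G : SimpleGraph V) (hni : ∀ v : V, ∃ u : V, G.Adj v u)
    (hloc : ∀ x : V, W2In G (loc G {x}) ∧
      alphaIn G (loc G {x}) = alphaIn G Finset.univ - 1)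
    (hedge : ∀ a b : V, G.Adj a b → WellCoveredIn G (locE G a b) ∧
      alphaIn G (locE G a b) = alphaIn G Finset.univ - 1)
    (hloc' : ∀ y : V, NoIsolatedIn G (loc G {y})) :
    ∀ x : V, WellCoveredIn G (Finset.univ.erase x) ∧
      alphaIn G (Finset.univ.erase x) = alphaIn G Finset.univ := by
  classical
  intro x
  set α := alphaIn G Finset.univ with hαdef
  -- α ≥ 1
  have hsingle : ∀ v : V, IsIndep G ({v} : Finset V) := by
    intro v u hu w hw
    rw [Finset.mem_singleton] at hu hw
    subst hu; subst hw
    exact fun h => G.loopless.irrefl _ h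
  have hα1 : 1 ≤ α := by
    have := card_le_alphaIn (Finset.subset_univ ({x} : Finset V)) (hsingle x)
    simpa using this
  -- G is well-covered
  have hGwc : ∀ M, IsMaxIndepIn G Finset.univ M → M.card = α := by
    rintro M ⟨hMA, hMI, hMmax⟩
    have hMne : M.Nonempty := by
      rcases Finset.eq_empty_or_nonempty M with rfl | h
      · exact absurd (by simpa using hsingle x)
          (hMmax x (Finset.mem_univ x) (Finset.notMem_empty x))
      · exact h
    obtain ⟨v, hv⟩ := hMne
    have h1 : IsMaxIndepIn G (loc G {v}) (M.erase v) := by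
      refine ⟨?_, indep_subset' hMI (Finset.erase_subset _ _), ?_⟩
      · intro t ht
        rw [Finset.mem_erase] at ht
        exact mem_loc_singleton.2 ⟨ht.1, hMI v hv t ht.2⟩
      · intro u hu huM hind
        rw [mem_loc_singleton] at hu
        have huM' : u ∉ M := by
          intro h
          exact huM (Finset.mem_erase.2 ⟨hu.1, h⟩)
        obtain ⟨m, hm, hadj⟩ := adj_of_not_indep_insert hMI
          (hMmax u (Finset.mem_univ u) huM')
        have hmv : m ≠ v := by
          rintro rfl
          exact hu.2 hadj.symm
        exact hind u (Finset.mem_insert_self _ _) m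
          (Finset.mem_insert_of_mem (Finset.mem_erase.2 ⟨hmv, hm⟩)) hadj
    have hcard := (hloc v).1.1 _ h1
    rw [(hloc v).2] at hcard
    rw [Finset.card_erase_of_mem hv] at hcard
    have hpos : 1 ≤ M.card := Finset.card_pos.2 ⟨v, hv⟩
    have hle : M.card ≤ α := card_le_alphaIn hMA hMI
    omega
  -- α(G \ x) = α
  have hαx : alphaIn G (Finset.univ.erase x) = α := by
    refine le_antisymm (alphaIn_mono (Finset.erase_subset _ _)) ?_
    obtain ⟨y, hxy⟩ := hni x
    obtain ⟨T, -, hTmax⟩ := exists_max_indep G (Finset.empty_subset (loc G {y}))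
      (fun u hu => absurd hu (Finset.notMem_empty u))
    have hTcard : T.card = α - 1 := by
      have := (hloc y).1.1 _ hTmax
      rw [(hloc y).2] at this
      exact this
    have hyT : y ∉ T := by
      intro h
      exact (mem_loc_singleton.1 (hTmax.1 h)).1 rfl
    have hsub : insert y T ⊆ Finset.univ.erase x := by
      intro t ht
      rcases Finset.mem_insert.1 ht with rfl | ht'
      · exact Finset.mem_erase.2 ⟨fun h => G.loopless.irrefl x (h ▸ hxy), Finset.mem_univ _⟩
      · have := hTmax.1 ht'
        rw [mem_loc_singleton] at this
        refine Finset.mem_erase.2 ⟨?_, Finset.mem_univ _⟩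
        rintro rfl
        exact this.2 hxy.symm
    have hind : IsIndep G (insert y T) := by
      intro a ha b hb
      rcases Finset.mem_insert.1 ha with rfl | ha'
      · rcases Finset.mem_insert.1 hb with rfl | hb'
        · exact fun h => G.loopless.irrefl _ h
        · exact (mem_loc_singleton.1 (hTmax.1 hb')).2
      · rcases Finset.mem_insert.1 hb with rfl | hb'
        · exact fun h => (mem_loc_singleton.1 (hTmax.1 ha')).2 h.symm
        · exact hTmax.2.1 a ha' b hb'
    have hc := card_le_alphaIn hsub hind
    rw [Finset.card_insert_of_notMem hyT, hTcard] at hc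
    omega
  refine ⟨?_, hαx⟩
  rintro S ⟨hSsub, hSind, hSmax⟩
  rw [hαx]
  have hxS : x ∉ S := fun h => (Finset.mem_erase.1 (hSsub h)).1 rfl
  by_cases hxadj : ∃ s ∈ S, G.Adj x s
  · -- Case A : S is maximal in G
    refine hGwc S ⟨Finset.subset_univ S, hSind, ?_⟩
    intro v _ hvS
    by_cases hvx : v = x
    · subst hvx
      intro hind
      obtain ⟨s, hs, hadj⟩ := hxadj
      exact hind v (Finset.mem_insert_self _ _) s (Finset.mem_insert_of_mem hs) hadj
    · exact hSmax v (Finset.mem_erase.2 ⟨hvx, Finset.mem_univ _⟩) hvS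
  · -- Case B : x has no neighbor in S
    push_neg at hxadj
    have hSne : S.Nonempty := by
      rcases Finset.eq_empty_or_nonempty S with rfl | h
      · obtain ⟨y, hxy⟩ := hni x
        have hyx : y ≠ x := fun h => G.loopless.irrefl x (h ▸ hxy)
        exact absurd (by simpa using hsingle y)
          (hSmax y (Finset.mem_erase.2 ⟨hyx, Finset.mem_univ _⟩) (Finset.notMem_empty y))
      · exact h
    obtain ⟨s, hs⟩ := hSne
    have hxloc : x ∈ loc G {s} :=
      mem_loc_singleton.2 ⟨Ne.symm (Finset.mem_erase.1 (hSsub hs)).1,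
        fun h => hxadj s hs h.symm⟩
    have hsub' : S.erase s ⊆ (loc G {s}).erase x := by
      intro t ht
      rw [Finset.mem_erase] at ht
      refine Finset.mem_erase.2 ⟨(Finset.mem_erase.1 (hSsub ht.2)).1,
        mem_loc_singleton.2 ⟨ht.1, hSind s hs t ht.2⟩⟩
    obtain ⟨R, hRsup, hRmax⟩ := exists_max_indep G hsub'
      (indep_subset' hSind (Finset.erase_subset _ _))
    have hsR : s ∉ R := by
      intro h
      exact (mem_loc_singleton.1 (Finset.mem_erase.1 (hRmax.1 h)).2).1 rfl
    have hRsubS : ∀ w ∈ R, w ∈ S := by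
      intro w hw
      by_contra hwS
      have hwA : w ∈ (loc G {s}).erase x := hRmax.1 hw
      rw [Finset.mem_erase] at hwA
      have hwloc := mem_loc_singleton.1 hwA.2
      refine hSmax w (Finset.mem_erase.2 ⟨hwA.1, Finset.mem_univ _⟩) hwS ?_
      intro a ha b hb
      rcases Finset.mem_insert.1 ha with rfl | ha'
      · rcases Finset.mem_insert.1 hb with rfl | hb'
        · exact fun h => G.loopless.irrefl _ h
        · -- a = w, b ∈ S
          by_cases hbs : b = s
          · subst hbs
            exact fun h => hwloc.2 h.symm
          · exact hRmax.2.1 a hw b (hRsup (Finset.mem_erase.2 ⟨hbs, hb'⟩))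
      · rcases Finset.mem_insert.1 hb with rfl | hb'
        · by_cases has : a = s
          · subst has
            exact fun h => hwloc.2 h
          · exact hRmax.2.1 b hw a (hRsup (Finset.mem_erase.2 ⟨has, ha'⟩)) ∘ SimpleGraph.Adj.symm
        · exact hSind a ha' b hb'
    have hReq : R = S.erase s := by
      apply Finset.Subset.antisymm _ hRsup
      intro w hw
      refine Finset.mem_erase.2 ⟨?_, hRsubS w hw⟩
      rintro rfl
      exact hsR hw
    have hW2 := (hloc s).1.2 x hxloc
    have hcard := hW2.1 _ hRmax
    rw [hW2.2, (hloc s).2, hReq, Finset.card_erase_of_mem hs] at hcard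
    have hpos : 1 ≤ S.card := Finset.card_pos.2 ⟨s, hs⟩
    have hle : S.card ≤ α := card_le_alphaIn (Finset.subset_univ S) hSind
    omega

end EdgeIdealPaper
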